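/- Let (p_i), (q_i), (k_i) be nonnegative with k_i = O(i), and suppose for sufficiently large i, q_i = a i^η for some constants a, η > 0. Then every solution y of the silicosis system on [0,T) has components x and M_i of class C¹ on (0,T) and satisfies the equations in the classical differential sense on (0,T). -/

import Mathlib

open MeasureTheory Set Filter

noncomputable section

/-- A solution of the silicosis system (Definition 2.2) on the time domain `D`
(`D = Set.Ico 0 T` or `D = Set.Ici 0`): componentwise continuous, nonnegative,
with locally bounded norm `‖y(t)‖ = x(t) + ∑ (i+1) Mᵢ(t)`, the integrability
conditions, and the integrated versions of the equations. -/
structure IsSol (k p q : ℕ → ℝ) (r α : ℝ) (D : Set ℝ) (x : ℝ → ℝ) (M : ℕ → ℝ → ℝ) : Prop where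
  x_nonneg : ∀ t ∈ D, 0 ≤ x t
  M_nonneg : ∀ (i : ℕ), ∀ t ∈ D, 0 ≤ M i t
  x_cont : ContinuousOn x D
  M_cont : ∀ i : ℕ, ContinuousOn (M i) D
  summable_norm : ∀ t ∈ D, Summable (fun i : ℕ => ((i : ℝ) + 1) * M i t)
  norm_bdd : ∀ T' : ℝ, Icc (0:ℝ) T' ⊆ D →
    ∃ C : ℝ, ∀ t ∈ Icc (0:ℝ) T', x t + ∑' i : ℕ, ((i : ℝ) + 1) * M i t ≤ C
  summable_mom : ∀ t ∈ D,
    Summable (fun i : ℕ => ((i : ℝ) * p i + (i : ℝ) * q i + k i) * M i t)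
  x_int : ∀ t ∈ D, IntervalIntegrable x volume 0 t
  mom_int : ∀ t ∈ D,
    IntervalIntegrable (fun s => ∑' i : ℕ, ((i : ℝ) * p i + (i : ℝ) * q i + k i) * M i s)
      volume 0 t
  eq_M0 : ∀ t ∈ D,
    M 0 t = M 0 0 + r * t - ∫ s in (0:ℝ)..t, (k 0 * x s * M 0 s + (p 0 + q 0) * M 0 s)
  eq_M : ∀ i : ℕ, 1 ≤ i → ∀ t ∈ D,
    M i t = M i 0 + ∫ s in (0:ℝ)..t,
      (k (i-1) * x s * M (i-1) s - k i * x s * M i s - (p i + q i) * M i s)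
  eq_x : ∀ t ∈ D,
    x t = x 0 + α * t + ∫ s in (0:ℝ)..t,
      (-(x s * ∑' i : ℕ, k i * M i s) + ∑' i : ℕ, (i : ℝ) * q i * M i s)

/-- Integral form of Gronwall's inequality. -/
lemma gronwall_int {g : ℝ → ℝ} {a b A B : ℝ} (hab : a ≤ b)
    (hg : ContinuousOn g (Icc a b)) (hB : 0 ≤ B)
    (h : ∀ t ∈ Icc a b, g t ≤ A + B * ∫ u in a..t, g u) :
    ∀ t ∈ Icc a b, g t ≤ A * Real.exp (B * (t - a)) := by
  have hint : ∀ t ∈ Icc a b, IntervalIntegrable g volume a t := by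
    intro t ht
    apply ContinuousOn.intervalIntegrable
    apply hg.mono
    rw [uIcc_of_le ht.1]
    exact Icc_subset_Icc le_rfl ht.2
  set G : ℝ → ℝ := fun t => ∫ u in a..t, g u with hG
  have hGcont : ContinuousOn G (Icc a b) := by
    have h0 : IntegrableOn g (uIcc a b) volume := by
      rw [uIcc_of_le hab]; exact hg.integrableOn_Icc
    have := intervalIntegral.continuousOn_primitive_interval (f := g) (a := a) (b := b) h0
    rwa [uIcc_of_le hab] at this
  have hG' : ∀ t ∈ Ioo a b, HasDerivAt G (g t) t := by
    intro t ht
    apply intervalIntegral.integral_hasDerivAt_right (hint t ⟨ht.1.le, ht.2.le⟩)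
    · exact (hg.mono Ioo_subset_Icc_self).stronglyMeasurableAtFilter isOpen_Ioo t ht
    · exact (hg.mono Ioo_subset_Icc_self).continuousAt (Ioo_mem_nhds ht.1 ht.2)
  set ψ : ℝ → ℝ := fun t => (A + B * G t) * Real.exp (-B * (t - a)) with hψ
  have hψd : ∀ t ∈ Ioo a b, HasDerivAt ψ
      ((B * g t) * Real.exp (-B * (t - a)) + (A + B * G t) * (-B * Real.exp (-B * (t - a)))) t := by
    intro t ht
    have h1 : HasDerivAt (fun t => A + B * G t) (B * g t) t := ((hG' t ht).const_mul B).const_add A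
    have h2 : HasDerivAt (fun t : ℝ => Real.exp (-B * (t - a))) (-B * Real.exp (-B * (t - a))) t := by
      have : HasDerivAt (fun t : ℝ => -B * (t - a)) (-B) t := by
        simpa using (((hasDerivAt_id t).sub_const a).const_mul (-B))
      simpa [mul_comm] using this.exp
    exact h1.mul h2
  have hanti : AntitoneOn ψ (Icc a b) := by
    apply antitoneOn_of_deriv_nonpos (convex_Icc a b)
    · apply ContinuousOn.mul (continuousOn_const.add (continuousOn_const.mul hGcont))
      exact (Real.continuous_exp.comp (continuous_const.mul (continuous_id.sub continuous_const))).continuousOn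
    · intro t ht
      rw [interior_Icc] at ht
      exact ((hψd t ht).differentiableAt).differentiableWithinAt
    · intro t ht
      rw [interior_Icc] at ht
      rw [(hψd t ht).deriv]
      have hgle : g t ≤ A + B * G t := h t ⟨ht.1.le, ht.2.le⟩
      have hexp : 0 < Real.exp (-B * (t - a)) := Real.exp_pos _
      nlinarith [mul_nonneg (mul_nonneg hB hexp.le) (sub_nonneg.2 hgle)]
  intro t ht
  have h1 : ψ t ≤ ψ a := hanti (left_mem_Icc.2 hab) ht ht.1
  have h2 : ψ a = A := by simp [hψ, hG]
  have h3 : A + B * G t ≤ A * Real.exp (B * (t - a)) := by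
    rw [h2] at h1
    have hexp : 0 < Real.exp (-B * (t - a)) := Real.exp_pos _
    calc A + B * G t = ψ t / Real.exp (-B * (t - a)) := by field_simp [hψ]; simp only [hψ, neg_mul]
      _ ≤ A / Real.exp (-B * (t - a)) := div_le_div_of_nonneg_right h1 hexp.le
      _ = A * Real.exp (B * (t - a)) := by
          rw [div_eq_iff hexp.ne', mul_assoc, ← Real.exp_add]
          ring_nf
          simp
  exact le_trans (h t ht) h3

lemma abel_bound (w A C : ℕ → ℝ) (n m : ℕ) (hn : 1 ≤ n)
    (hw : ∀ i, n ≤ i → 0 ≤ w i) (hA : ∀ i, 0 ≤ A i) (hC : ∀ i, 0 ≤ C i) :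
    ∑ i ∈ Finset.Ico n m, w i * (A (i-1) - A i - C i) ≤
      w n * A (n-1) + ∑ i ∈ Finset.Ico n (m-1), (w (i+1) - w i) * A i := by
  rcases le_or_gt m n with hmn | hnm
  · rw [Finset.Ico_eq_empty (by omega), Finset.Ico_eq_empty (by omega)]
    simp [mul_nonneg (hw n le_rfl) (hA (n-1))]
  · have step1 : ∑ i ∈ Finset.Ico n m, w i * (A (i-1) - A i - C i) ≤
        ∑ i ∈ Finset.Ico n m, (w i * A (i-1) - w i * A i) := by
      apply Finset.sum_le_sum
      intro i hi
      have := mul_nonneg (hw i (Finset.mem_Ico.1 hi).1) (hC i)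
      nlinarith
    have step3 : ∑ i ∈ Finset.Ico n m, w i * A (i-1) =
        w n * A (n-1) + ∑ i ∈ Finset.Ico n (m-1), w (i+1) * A i := by
      rw [Finset.sum_eq_sum_Ico_succ_bot hnm]
      congr 1
      have hmap : Finset.Ico (n+1) m = Finset.map (addRightEmbedding 1) (Finset.Ico n (m-1)) := by
        rw [Finset.map_add_right_Ico]
        congr 1
        omega
      rw [hmap, Finset.sum_map]
      apply Finset.sum_congr rfl
      intro i _
      simp [addRightEmbedding]
    have step4 : ∑ i ∈ Finset.Ico n (m-1), w i * A i ≤ ∑ i ∈ Finset.Ico n m, w i * A i := by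
      apply Finset.sum_le_sum_of_subset_of_nonneg
      · exact Finset.Ico_subset_Ico le_rfl (by omega)
      · intro i hi _
        exact mul_nonneg (hw i (Finset.mem_Ico.1 hi).1) (hA i)
    have step5 : ∑ i ∈ Finset.Ico n (m-1), (w (i+1) - w i) * A i =
        ∑ i ∈ Finset.Ico n (m-1), w (i+1) * A i - ∑ i ∈ Finset.Ico n (m-1), w i * A i := by
      rw [← Finset.sum_sub_distrib]
      apply Finset.sum_congr rfl
      intro i _
      ring
    rw [Finset.sum_sub_distrib] at step1
    linarith

lemma rpow_succ_sub_le {y pw : ℝ} (hy : 1 ≤ y) (hp : 1 ≤ pw) :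
    (y+1)^pw - y^pw ≤ pw * (y+1)^(pw-1) := by
  have hlt : y < y + 1 := by linarith
  have hcont : ContinuousOn (fun z : ℝ => z ^ pw) (Icc y (y+1)) := by
    intro z hz
    exact (Real.continuousAt_rpow_const z pw (Or.inl (by nlinarith [hz.1]))).continuousWithinAt
  have hderiv : ∀ z ∈ Ioo y (y+1), HasDerivAt (fun z : ℝ => z^pw) (pw * z^(pw-1)) z :=
    fun z _ => Real.hasDerivAt_rpow_const (Or.inr hp)
  obtain ⟨c, hc, hceq⟩ := exists_hasDerivAt_eq_slope (fun z : ℝ => z^pw)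
    (fun z => pw*z^(pw-1)) hlt hcont hderiv
  have he : (y+1)^pw - y^pw = pw * c^(pw-1) := by
    rw [hceq]; simp
  rw [he]
  have h1 : c^(pw-1) ≤ (y+1)^(pw-1) :=
    Real.rpow_le_rpow (by linarith [hc.1]) hc.2.le (by linarith)
  exact mul_le_mul_of_nonneg_left h1 (by linarith)

set_option maxHeartbeats 2000000 in
lemma tail_small
    (k p q : ℕ → ℝ) (hk : ∀ i, 0 ≤ k i) (hp : ∀ i, 0 ≤ p i) (hq : ∀ i, 0 ≤ q i)
    (r α : ℝ) (T : ℝ) (x : ℝ → ℝ) (M : ℕ → ℝ → ℝ)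
    (hsol : IsSol k p q r α (Set.Ico 0 T) x M)
    (hT : 0 < T)
    (Q : ℕ → ℝ) (hQdef : ∀ i, Q i = (i:ℝ) * q i)
    (N0 : ℕ) (hN01 : 1 ≤ N0)
    (B : ℝ) (hB : 0 ≤ B)
    (hQmono : ∀ n i, N0 ≤ n → n ≤ i → Q n ≤ Q i)
    (hK1 : ∀ i, N0 ≤ i → (Q (i+1) - Q i) * k i ≤ B * Q i)
    (hK3 : ∀ n i, N0 ≤ n → 2*n ≤ i → 2 * Q n ≤ Q i)
    (t0 : ℝ) (ht0 : t0 ∈ Ioo 0 T) (ε : ℝ) (hε : 0 < ε) :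
    ∃ δ > 0, ∃ m1 : ℕ, Icc (t0-δ) (t0+δ) ⊆ Ico 0 T ∧
      ∀ t ∈ Icc (t0-δ) (t0+δ), ∀ v : Finset ℕ, (∀ i ∈ v, m1 ≤ i) →
        ∑ i ∈ v, Q i * M i t ≤ ε := by
  obtain ⟨ht0p, ht0T⟩ := ht0
  -- basic nonnegativity
  have hQnn : ∀ i, 0 ≤ Q i := fun i => by rw [hQdef]; exact mul_nonneg (Nat.cast_nonneg i) (hq i)
  have hMnn : ∀ i, ∀ t ∈ Ico (0:ℝ) T, 0 ≤ M i t := hsol.M_nonneg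
  have hxnn : ∀ t ∈ Ico (0:ℝ) T, 0 ≤ x t := hsol.x_nonneg
  -- the compact time window [0, T']
  set T' : ℝ := (t0 + T)/2 with hT'def
  have hT'pos : 0 < T' := by simp [hT'def]; linarith
  have ht0T' : t0 < T' := by simp [hT'def]; linarith
  have hT'T : T' < T := by simp [hT'def]; linarith
  have hIcc : Icc (0:ℝ) T' ⊆ Ico 0 T := fun y hy => ⟨hy.1, lt_of_le_of_lt hy.2 hT'T⟩
  have h0mem : (0:ℝ) ∈ Ico (0:ℝ) T := ⟨le_rfl, hT⟩
  -- bound C on x and each M i on [0,T']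
  obtain ⟨C, hC⟩ := hsol.norm_bdd T' hIcc
  have htsnn : ∀ t ∈ Icc (0:ℝ) T', (0:ℝ) ≤ ∑' i : ℕ, ((i:ℝ)+1) * M i t := by
    intro t ht
    exact tsum_nonneg fun i => mul_nonneg (by positivity) (hMnn i t (hIcc ht))
  have hxle : ∀ t ∈ Icc (0:ℝ) T', x t ≤ C := by
    intro t ht
    have := hC t ht
    have := htsnn t ht
    linarith
  have hCnn : 0 ≤ C := by
    have h1 := hC 0 ⟨le_rfl, hT'pos.le⟩
    have h2 := htsnn 0 ⟨le_rfl, hT'pos.le⟩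
    have h3 := hxnn 0 h0mem
    linarith
  have hMle : ∀ i, ∀ t ∈ Icc (0:ℝ) T', M i t ≤ C := by
    intro i t ht
    have h1 : ((i:ℝ)+1) * M i t ≤ ∑' j : ℕ, ((j:ℝ)+1) * M j t :=
      Summable.le_tsum (hsol.summable_norm t (hIcc ht)) i
        (fun j _ => mul_nonneg (by positivity) (hMnn j t (hIcc ht)))
    have h2 := hC t ht
    have h3 := hxnn t (hIcc ht)
    have h4 := hMnn i t (hIcc ht)
    nlinarith [Nat.cast_nonneg (α := ℝ) i]
  -- summability of the moment Q i * M i t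
  have hQsum : ∀ t ∈ Ico (0:ℝ) T, Summable (fun i : ℕ => Q i * M i t) := by
    intro t ht
    apply Summable.of_nonneg_of_le (fun i => mul_nonneg (hQnn i) (hMnn i t ht))
      (fun i => ?_) (hsol.summable_mom t ht)
    have h1 := hMnn i t ht
    have h2 : Q i ≤ (i:ℝ) * p i + (i:ℝ) * q i + k i := by
      rw [hQdef]
      have := mul_nonneg (Nat.cast_nonneg (α := ℝ) i) (hp i)
      have := hk i
      linarith
    exact mul_le_mul_of_nonneg_right h2 h1
  -- integrability / continuity of the pieces
  have hfc : ∀ i : ℕ, ContinuousOn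
      (fun u => k (i-1) * x u * M (i-1) u - k i * x u * M i u - (p i + q i) * M i u)
      (Ico (0:ℝ) T) := by
    intro i
    exact (((continuousOn_const.mul hsol.x_cont).mul (hsol.M_cont (i-1))).sub
      ((continuousOn_const.mul hsol.x_cont).mul (hsol.M_cont i))).sub
      (continuousOn_const.mul (hsol.M_cont i))
  have hsubIcc : ∀ t ∈ Ico (0:ℝ) T, Icc (0:ℝ) t ⊆ Ico (0:ℝ) T :=
    fun t ht y hy => ⟨hy.1, lt_of_le_of_lt hy.2 ht.2⟩
  have hfint : ∀ i : ℕ, ∀ t ∈ Ico (0:ℝ) T, IntervalIntegrable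
      (fun u => k (i-1) * x u * M (i-1) u - k i * x u * M i u - (p i + q i) * M i u)
      volume 0 t := by
    intro i t ht
    apply ContinuousOn.intervalIntegrable
    apply (hfc i).mono
    rw [uIcc_of_le ht.1]
    exact hsubIcc t ht
  -- differences of the integral equation
  have hMdiff : ∀ i : ℕ, 1 ≤ i → ∀ s ∈ Ico (0:ℝ) T, ∀ t ∈ Ico (0:ℝ) T,
      M i t = M i s + ∫ u in s..t,
        (k (i-1) * x u * M (i-1) u - k i * x u * M i u - (p i + q i) * M i u) := by
    intro i hi s hs t ht
    have h1 := hsol.eq_M i hi t ht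
    have h2 := hsol.eq_M i hi s hs
    have h3 := intervalIntegral.integral_interval_sub_left (hfint i t ht) (hfint i s hs)
    rw [h1, h2]
    linarith [h3]
  -- weighted finite-sum identity
  have hSsum : ∀ (w : ℕ → ℝ) (n m : ℕ), 1 ≤ n → ∀ s ∈ Ico (0:ℝ) T, ∀ t ∈ Ico (0:ℝ) T,
      ∑ i ∈ Finset.Ico n m, w i * M i t = ∑ i ∈ Finset.Ico n m, w i * M i s +
        ∫ u in s..t, ∑ i ∈ Finset.Ico n m,
          w i * (k (i-1) * x u * M (i-1) u - k i * x u * M i u - (p i + q i) * M i u) := by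
    intro w n m hn s hs t ht
    rw [intervalIntegral.integral_finset_sum (fun i _ => (((hfint i s hs).symm.trans
        (hfint i t ht)).const_mul (w i)))]
    rw [← Finset.sum_add_distrib]
    apply Finset.sum_congr rfl
    intro i hi
    rw [intervalIntegral.integral_const_mul,
      hMdiff i (le_trans hn (Finset.mem_Ico.1 hi).1) s hs t ht]
    ring
  -- continuity of weighted partial sums
  have hScont : ∀ (w : ℕ → ℝ) (n m : ℕ),
      ContinuousOn (fun t => ∑ i ∈ Finset.Ico n m, w i * M i t) (Ico (0:ℝ) T) :=
    fun w n m => continuousOn_finset_sum _ (fun i _ => continuousOn_const.mul (hsol.M_cont i))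
  have hhc : ∀ (w : ℕ → ℝ) (n m : ℕ), ContinuousOn (fun u => ∑ i ∈ Finset.Ico n m,
      w i * (k (i-1) * x u * M (i-1) u - k i * x u * M i u - (p i + q i) * M i u))
      (Ico (0:ℝ) T) :=
    fun w n m => continuousOn_finset_sum _ (fun i _ => continuousOn_const.mul (hfc i))
  -- constants for step A
  obtain ⟨A0, hA0def⟩ : ∃ A0 : ℝ, A0 = ∑' i : ℕ, Q i * M i 0 := ⟨_, rfl⟩
  have hA0nn : 0 ≤ A0 := by
    rw [hA0def]
    exact tsum_nonneg (fun i => mul_nonneg (hQnn i) (hMnn i 0 h0mem))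
  obtain ⟨C0, hC0def⟩ : ∃ C0 : ℝ, C0 = Q N0 * (k (N0-1) * C * C) := ⟨_, rfl⟩
  have hC0nn : 0 ≤ C0 := by
    rw [hC0def]
    apply mul_nonneg (hQnn N0)
    exact mul_nonneg (mul_nonneg (hk (N0-1)) hCnn) hCnn
  -- termwise flux bound used in both cases
  have hflux : ∀ i : ℕ, N0 ≤ i → ∀ u ∈ Icc (0:ℝ) T',
      (Q (i+1) - Q i) * (k i * x u * M i u) ≤ (B*C) * (Q i * M i u) := by
    intro i hi u hu
    have huD : u ∈ Ico (0:ℝ) T := hIcc hu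
    have hxu := hxnn u huD
    have hMu := hMnn i u huD
    calc (Q (i+1) - Q i) * (k i * x u * M i u)
        = ((Q (i+1) - Q i) * k i) * (x u * M i u) := by ring
      _ ≤ (B * Q i) * (x u * M i u) :=
          mul_le_mul_of_nonneg_right (hK1 i hi) (mul_nonneg hxu hMu)
      _ ≤ (B * Q i) * (C * M i u) :=
          mul_le_mul_of_nonneg_left (mul_le_mul_of_nonneg_right (hxle u hu) hMu)
            (mul_nonneg hB (hQnn i))
      _ = (B*C) * (Q i * M i u) := by ring
  -- step A : pointwise bound on the weighted integrand, weight Q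
  have hcaseA : ∀ m : ℕ, ∀ u ∈ Icc (0:ℝ) T',
      ∑ i ∈ Finset.Ico N0 m,
        Q i * (k (i-1) * x u * M (i-1) u - k i * x u * M i u - (p i + q i) * M i u)
        ≤ C0 + (B*C) * ∑ i ∈ Finset.Ico N0 m, Q i * M i u := by
    intro m u hu
    have huD : u ∈ Ico (0:ℝ) T := hIcc hu
    have hab := abel_bound Q (fun j => k j * x u * M j u) (fun i => (p i + q i) * M i u)
      N0 m hN01 (fun i _ => hQnn i)
      (fun j => mul_nonneg (mul_nonneg (hk j) (hxnn u huD)) (hMnn j u huD))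
      (fun i => mul_nonneg (by have := hp i; have := hq i; linarith) (hMnn i u huD))
    beta_reduce at hab
    refine le_trans hab ?_
    have h1 : Q N0 * (k (N0-1) * x u * M (N0-1) u) ≤ C0 := by
      rw [hC0def]
      have hx1 := hxle u hu
      have hM1 := hMle (N0-1) u hu
      have hk1 := hk (N0-1)
      have hx0 := hxnn u huD
      have hM0 := hMnn (N0-1) u huD
      have hQ0 := hQnn N0
      have hxm : x u * M (N0-1) u ≤ C * C := mul_le_mul hx1 hM1 hM0 hCnn
      have : k (N0-1) * x u * M (N0-1) u ≤ k (N0-1) * C * C := by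
        calc k (N0-1) * x u * M (N0-1) u = k (N0-1) * (x u * M (N0-1) u) := by ring
          _ ≤ k (N0-1) * (C*C) := mul_le_mul_of_nonneg_left hxm hk1
          _ = k (N0-1) * C * C := by ring
      exact mul_le_mul_of_nonneg_left this hQ0
    have h2 : ∑ i ∈ Finset.Ico N0 (m-1), (Q (i+1) - Q i) * (k i * x u * M i u)
        ≤ (B*C) * ∑ i ∈ Finset.Ico N0 m, Q i * M i u := by
      calc ∑ i ∈ Finset.Ico N0 (m-1), (Q (i+1) - Q i) * (k i * x u * M i u)
          ≤ ∑ i ∈ Finset.Ico N0 (m-1), (B*C) * (Q i * M i u) :=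
            Finset.sum_le_sum (fun i hi => hflux i (Finset.mem_Ico.1 hi).1 u hu)
        _ = (B*C) * ∑ i ∈ Finset.Ico N0 (m-1), Q i * M i u := by rw [Finset.mul_sum]
        _ ≤ (B*C) * ∑ i ∈ Finset.Ico N0 m, Q i * M i u := by
            apply mul_le_mul_of_nonneg_left ?_ (mul_nonneg hB hCnn)
            apply Finset.sum_le_sum_of_subset_of_nonneg
              (Finset.Ico_subset_Ico le_rfl (by omega))
            exact fun i _ _ => mul_nonneg (hQnn i) (hMnn i u huD)
    linarith
  -- Gronwall, step A : uniform bound on the partial moments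
  obtain ⟨U, hUdef⟩ : ∃ U : ℝ, U = (A0 + C0*T') * Real.exp (B*C*T') := ⟨_, rfl⟩
  have hgronA : ∀ m : ℕ, ∀ t ∈ Icc (0:ℝ) T', ∑ i ∈ Finset.Ico N0 m, Q i * M i t ≤ U := by
    intro m
    have hintS : ∀ t ∈ Icc (0:ℝ) T', IntervalIntegrable
        (fun u => ∑ i ∈ Finset.Ico N0 m, Q i * M i u) volume 0 t := by
      intro t ht
      apply ContinuousOn.intervalIntegrable
      apply (hScont Q N0 m).mono
      rw [uIcc_of_le ht.1]
      exact hsubIcc t (hIcc ht)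
    have hmain : ∀ t ∈ Icc (0:ℝ) T', ∑ i ∈ Finset.Ico N0 m, Q i * M i t ≤
        (A0 + C0*T') + (B*C) * ∫ u in (0:ℝ)..t, ∑ i ∈ Finset.Ico N0 m, Q i * M i u := by
      intro t ht
      have hid := hSsum Q N0 m hN01 0 h0mem t (hIcc ht)
      have hintf : IntervalIntegrable (fun u => ∑ i ∈ Finset.Ico N0 m,
          Q i * (k (i-1) * x u * M (i-1) u - k i * x u * M i u - (p i + q i) * M i u))
          volume 0 t := by
        apply ContinuousOn.intervalIntegrable
        apply (hhc Q N0 m).mono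
        rw [uIcc_of_le ht.1]
        exact hsubIcc t (hIcc ht)
      have hintg : IntervalIntegrable
          (fun u => C0 + (B*C) * ∑ i ∈ Finset.Ico N0 m, Q i * M i u) volume 0 t :=
        intervalIntegrable_const.add ((hintS t ht).const_mul _)
      have hmono := intervalIntegral.integral_mono_on ht.1 hintf hintg
        (fun u hu => hcaseA m u ⟨hu.1, le_trans hu.2 ht.2⟩)
      have hsplit : (∫ u in (0:ℝ)..t, (C0 + (B*C) * ∑ i ∈ Finset.Ico N0 m, Q i * M i u))
          = C0 * t + (B*C) * ∫ u in (0:ℝ)..t, ∑ i ∈ Finset.Ico N0 m, Q i * M i u := by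
        rw [intervalIntegral.integral_add intervalIntegrable_const ((hintS t ht).const_mul _)]
        rw [intervalIntegral.integral_const, smul_eq_mul]
        rw [intervalIntegral.integral_const_mul ((B:ℝ)*C)
          (f := fun u => ∑ i ∈ Finset.Ico N0 m, Q i * M i u)]
        ring
      have hS0 : ∑ i ∈ Finset.Ico N0 m, Q i * M i 0 ≤ A0 := by
        rw [hA0def]
        exact Summable.sum_le_tsum _ (fun i _ => mul_nonneg (hQnn i) (hMnn i 0 h0mem)) (hQsum 0 h0mem)
      have hC0t : C0 * t ≤ C0 * T' := mul_le_mul_of_nonneg_left ht.2 hC0nn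
      calc ∑ i ∈ Finset.Ico N0 m, Q i * M i t
          = ∑ i ∈ Finset.Ico N0 m, Q i * M i 0 + ∫ u in (0:ℝ)..t, ∑ i ∈ Finset.Ico N0 m,
              Q i * (k (i-1) * x u * M (i-1) u - k i * x u * M i u - (p i + q i) * M i u) := hid
        _ ≤ ∑ i ∈ Finset.Ico N0 m, Q i * M i 0 +
            ∫ u in (0:ℝ)..t, (C0 + (B*C) * ∑ i ∈ Finset.Ico N0 m, Q i * M i u) := by
            linarith [hmono]
        _ = ∑ i ∈ Finset.Ico N0 m, Q i * M i 0 +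
            (C0 * t + (B*C) * ∫ u in (0:ℝ)..t, ∑ i ∈ Finset.Ico N0 m, Q i * M i u) := by
            rw [hsplit]
        _ ≤ (A0 + C0*T') + (B*C) * ∫ u in (0:ℝ)..t, ∑ i ∈ Finset.Ico N0 m, Q i * M i u := by
            linarith
    have hg := gronwall_int (a := 0) (b := T') hT'pos.le
      ((hScont Q N0 m).mono hIcc) (mul_nonneg hB hCnn) hmain
    intro t ht
    refine le_trans (hg t ht) ?_
    rw [hUdef]
    apply mul_le_mul_of_nonneg_left ?_
      (add_nonneg hA0nn (mul_nonneg hC0nn hT'pos.le))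
    apply Real.exp_le_exp.2
    have h20 := ht.1
    have h21 := ht.2
    nlinarith [mul_nonneg hB hCnn]
  have hUnn : 0 ≤ U := by
    rw [hUdef]
    exact mul_nonneg (add_nonneg hA0nn (mul_nonneg hC0nn hT'pos.le)) (Real.exp_pos _).le
  -- step B : choice of the window and of the cutoff
  obtain ⟨e, hedef⟩ : ∃ e : ℝ, e = Real.exp (B*C*T') := ⟨_, rfl⟩
  have hepos : 0 < e := hedef ▸ Real.exp_pos _
  have he1 : 1 ≤ e := hedef ▸ Real.one_le_exp (mul_nonneg (mul_nonneg hB hCnn) hT'pos.le)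
  obtain ⟨D2, hD2def⟩ : ∃ D2 : ℝ, D2 = B*C*U := ⟨_, rfl⟩
  have hD2nn : 0 ≤ D2 := by rw [hD2def]; exact mul_nonneg (mul_nonneg hB hCnn) hUnn
  obtain ⟨δ, hδdef⟩ : ∃ δ : ℝ, δ = min (min (t0/2) ((T' - t0)/2)) (ε / (32*(D2+1)*e)) :=
    ⟨_, rfl⟩
  have hXpos : 0 < 32*(D2+1)*e := by
    have : (0:ℝ) < 32*(D2+1) := by linarith
    exact mul_pos this hepos
  have hδpos : 0 < δ := by
    rw [hδdef]
    exact lt_min (lt_min (by linarith) (by linarith)) (div_pos hε hXpos)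
  have hδt0 : δ ≤ t0/2 := hδdef ▸ le_trans (min_le_left _ _) (min_le_left _ _)
  have hδT' : δ ≤ (T' - t0)/2 := hδdef ▸ le_trans (min_le_left _ _) (min_le_right _ _)
  have hδε : δ ≤ ε / (32*(D2+1)*e) := hδdef ▸ min_le_right _ _
  obtain ⟨s0, hs0def⟩ : ∃ s0 : ℝ, s0 = t0 - δ := ⟨_, rfl⟩
  have hs0pos : 0 < s0 := by rw [hs0def]; linarith
  have hs0mem : s0 ∈ Ico (0:ℝ) T := ⟨hs0pos.le, by rw [hs0def]; linarith⟩
  have hwin : Icc s0 (t0+δ) ⊆ Icc (0:ℝ) T' := by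
    intro y hy
    constructor
    · linarith [hy.1]
    · linarith [hy.2]
  -- choice of the cutoff index using summability at time s0
  have hvan := summable_iff_vanishing.1 (hQsum s0 hs0mem) (Metric.ball 0 (ε/(8*e)))
    (Metric.ball_mem_nhds 0 (div_pos hε (by linarith)))
  obtain ⟨sfin, hsfin⟩ := hvan
  set n : ℕ := max (sfin.sup id + 1) N0 with hndef
  have hnN0 : N0 ≤ n := le_max_right _ _
  have hn1 : 1 ≤ n := le_trans hN01 hnN0
  have htail0 : ∀ v : Finset ℕ, (∀ i ∈ v, n ≤ i) → ∑ i ∈ v, Q i * M i s0 ≤ ε/(8*e) := by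
    intro v hv
    have hdisj : Disjoint v sfin := by
      rw [Finset.disjoint_left]
      intro i hiv hisf
      have h1 := hv i hiv
      have h2 : id i ≤ sfin.sup id := Finset.le_sup hisf
      simp only [id] at h2
      omega
    have := hsfin v hdisj
    rw [Metric.mem_ball, Real.dist_eq] at this
    calc ∑ i ∈ v, Q i * M i s0 ≤ |∑ i ∈ v, Q i * M i s0 - 0| := le_abs_self _ |>.trans (by simp)
      _ ≤ ε/(8*e) := by rw [abs_sub_comm] at this ⊢; linarith [this.le]
  -- step B : pointwise bound on the weighted integrand, weight Q · - Q n
  have hcaseB : ∀ m : ℕ, ∀ u ∈ Icc (0:ℝ) T',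
      ∑ i ∈ Finset.Ico n m,
        (Q i - Q n) * (k (i-1) * x u * M (i-1) u - k i * x u * M i u - (p i + q i) * M i u)
        ≤ D2 + (B*C) * ∑ i ∈ Finset.Ico n m, (Q i - Q n) * M i u := by
    intro m u hu
    have huD : u ∈ Ico (0:ℝ) T := hIcc hu
    have hab := abel_bound (fun i => Q i - Q n) (fun j => k j * x u * M j u)
      (fun i => (p i + q i) * M i u) n m hn1
      (fun i hi => sub_nonneg.2 (hQmono n i hnN0 hi))
      (fun j => mul_nonneg (mul_nonneg (hk j) (hxnn u huD)) (hMnn j u huD))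
      (fun i => mul_nonneg (by have := hp i; have := hq i; linarith) (hMnn i u huD))
    beta_reduce at hab
    refine le_trans hab ?_
    have h1 : (Q n - Q n) * (k (n-1) * x u * M (n-1) u) = 0 := by ring
    have h2 : ∑ i ∈ Finset.Ico n (m-1), ((Q (i+1) - Q n) - (Q i - Q n)) * (k i * x u * M i u)
        ≤ (B*C) * ∑ i ∈ Finset.Ico n m, (Q i - Q n) * M i u + D2 := by
      have hterm : ∀ i ∈ Finset.Ico n (m-1),
          ((Q (i+1) - Q n) - (Q i - Q n)) * (k i * x u * M i u)
          ≤ (B*C) * ((Q i - Q n) * M i u) + (B*C) * (Q i * M i u) := by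
        intro i hi
        have hiN0 : N0 ≤ i := le_trans hnN0 (Finset.mem_Ico.1 hi).1
        have hfl := hflux i hiN0 u hu
        have hMu := hMnn i u huD
        have hQni : Q n ≤ Q i := hQmono n i hnN0 (Finset.mem_Ico.1 hi).1
        have h3 : ((Q (i+1) - Q n) - (Q i - Q n)) * (k i * x u * M i u)
            = (Q (i+1) - Q i) * (k i * x u * M i u) := by ring
        rw [h3]
        refine le_trans hfl ?_
        have h4 : (B*C) * (Q i * M i u) = (B*C) * ((Q i - Q n) * M i u) + (B*C) * (Q n * M i u) := by
          ring
        rw [h4]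
        have h5 : (B*C) * (Q n * M i u) ≤ (B*C) * (Q i * M i u) :=
          mul_le_mul_of_nonneg_left (mul_le_mul_of_nonneg_right hQni hMu)
            (mul_nonneg hB hCnn)
        linarith
      calc ∑ i ∈ Finset.Ico n (m-1), ((Q (i+1) - Q n) - (Q i - Q n)) * (k i * x u * M i u)
          ≤ ∑ i ∈ Finset.Ico n (m-1),
              ((B*C) * ((Q i - Q n) * M i u) + (B*C) * (Q i * M i u)) :=
            Finset.sum_le_sum hterm
        _ = (B*C) * ∑ i ∈ Finset.Ico n (m-1), (Q i - Q n) * M i u +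
            (B*C) * ∑ i ∈ Finset.Ico n (m-1), Q i * M i u := by
            rw [Finset.sum_add_distrib, Finset.mul_sum, Finset.mul_sum]
        _ ≤ (B*C) * ∑ i ∈ Finset.Ico n m, (Q i - Q n) * M i u +
            (B*C) * ∑ i ∈ Finset.Ico N0 m, Q i * M i u := by
            have hBC : (0:ℝ) ≤ B*C := mul_nonneg hB hCnn
            have hs1 : ∑ i ∈ Finset.Ico n (m-1), (Q i - Q n) * M i u
                ≤ ∑ i ∈ Finset.Ico n m, (Q i - Q n) * M i u := by
              apply Finset.sum_le_sum_of_subset_of_nonneg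
                (Finset.Ico_subset_Ico le_rfl (by omega))
              exact fun i hi _ => mul_nonneg
                (sub_nonneg.2 (hQmono n i hnN0 (Finset.mem_Ico.1 hi).1)) (hMnn i u huD)
            have hs2 : ∑ i ∈ Finset.Ico n (m-1), Q i * M i u
                ≤ ∑ i ∈ Finset.Ico N0 m, Q i * M i u := by
              apply Finset.sum_le_sum_of_subset_of_nonneg
                (Finset.Ico_subset_Ico hnN0 (by omega))
              exact fun i hi _ => mul_nonneg (hQnn i) (hMnn i u huD)
            exact add_le_add (mul_le_mul_of_nonneg_left hs1 hBC)
              (mul_le_mul_of_nonneg_left hs2 hBC)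
        _ ≤ (B*C) * ∑ i ∈ Finset.Ico n m, (Q i - Q n) * M i u + D2 := by
            have h10 := hgronA m u hu
            have hBC : (0:ℝ) ≤ B*C := mul_nonneg hB hCnn
            rw [hD2def]
            linarith [mul_le_mul_of_nonneg_left h10 hBC]
    rw [h1]
    linarith
  -- Gronwall, step B
  have hgronB : ∀ m : ℕ, ∀ t ∈ Icc s0 (t0+δ),
      ∑ i ∈ Finset.Ico n m, (Q i - Q n) * M i t ≤ (ε/(8*e) + 2*δ*D2) * e := by
    intro m
    have hs0t0 : s0 ≤ t0 + δ := by rw [hs0def]; linarith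
    have hintS : ∀ t ∈ Icc s0 (t0+δ), IntervalIntegrable
        (fun u => ∑ i ∈ Finset.Ico n m, (Q i - Q n) * M i u) volume s0 t := by
      intro t ht
      apply ContinuousOn.intervalIntegrable
      apply (hScont (fun i => Q i - Q n) n m).mono
      rw [uIcc_of_le ht.1]
      exact fun y hy => hIcc (hwin ⟨hy.1, le_trans hy.2 ht.2⟩)
    have hmain : ∀ t ∈ Icc s0 (t0+δ), ∑ i ∈ Finset.Ico n m, (Q i - Q n) * M i t ≤
        (ε/(8*e) + 2*δ*D2) + (B*C) * ∫ u in s0..t,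
          ∑ i ∈ Finset.Ico n m, (Q i - Q n) * M i u := by
      intro t ht
      have htD : t ∈ Ico (0:ℝ) T := hIcc (hwin ht)
      have hid := hSsum (fun i => Q i - Q n) n m hn1 s0 hs0mem t htD
      have hintf : IntervalIntegrable (fun u => ∑ i ∈ Finset.Ico n m,
          (Q i - Q n) * (k (i-1) * x u * M (i-1) u - k i * x u * M i u - (p i + q i) * M i u))
          volume s0 t := by
        apply ContinuousOn.intervalIntegrable
        apply (hhc (fun i => Q i - Q n) n m).mono
        rw [uIcc_of_le ht.1]
        exact fun y hy => hIcc (hwin ⟨hy.1, le_trans hy.2 ht.2⟩)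
      have hintg : IntervalIntegrable
          (fun u => D2 + (B*C) * ∑ i ∈ Finset.Ico n m, (Q i - Q n) * M i u) volume s0 t :=
        intervalIntegrable_const.add ((hintS t ht).const_mul _)
      have hmono := intervalIntegral.integral_mono_on ht.1 hintf hintg
        (fun u hu => hcaseB m u (hwin ⟨hu.1, le_trans hu.2 ht.2⟩))
      have hsplit : (∫ u in s0..t, (D2 + (B*C) * ∑ i ∈ Finset.Ico n m, (Q i - Q n) * M i u))
          = D2 * (t - s0) + (B*C) * ∫ u in s0..t,
            ∑ i ∈ Finset.Ico n m, (Q i - Q n) * M i u := by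
        rw [intervalIntegral.integral_add intervalIntegrable_const ((hintS t ht).const_mul _)]
        rw [intervalIntegral.integral_const, smul_eq_mul]
        rw [intervalIntegral.integral_const_mul ((B:ℝ)*C)
          (f := fun u => ∑ i ∈ Finset.Ico n m, (Q i - Q n) * M i u)]
        ring
      have hS0 : ∑ i ∈ Finset.Ico n m, (Q i - Q n) * M i s0 ≤ ε/(8*e) := by
        refine le_trans ?_ (htail0 (Finset.Ico n m) (fun i hi => (Finset.mem_Ico.1 hi).1))
        apply Finset.sum_le_sum
        intro i hi
        have hMu := hMnn i s0 hs0mem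
        have hQn0 := hQnn n
        have h9 := mul_nonneg hQn0 hMu
        calc (Q i - Q n) * M i s0 = Q i * M i s0 - Q n * M i s0 := by ring
          _ ≤ Q i * M i s0 := by linarith
      have hts0 : D2 * (t - s0) ≤ 2*δ*D2 := by
        have h6 : t - s0 ≤ 2*δ := by
          have h := ht.2
          rw [hs0def]
          linarith
        calc D2 * (t - s0) ≤ D2 * (2*δ) := mul_le_mul_of_nonneg_left h6 hD2nn
          _ = 2*δ*D2 := by ring
      calc ∑ i ∈ Finset.Ico n m, (Q i - Q n) * M i t
          = ∑ i ∈ Finset.Ico n m, (Q i - Q n) * M i s0 + ∫ u in s0..t,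
              ∑ i ∈ Finset.Ico n m, (Q i - Q n) *
                (k (i-1) * x u * M (i-1) u - k i * x u * M i u - (p i + q i) * M i u) := hid
        _ ≤ ∑ i ∈ Finset.Ico n m, (Q i - Q n) * M i s0 +
            ∫ u in s0..t, (D2 + (B*C) * ∑ i ∈ Finset.Ico n m, (Q i - Q n) * M i u) := by
            linarith [hmono]
        _ = ∑ i ∈ Finset.Ico n m, (Q i - Q n) * M i s0 +
            (D2 * (t - s0) + (B*C) * ∫ u in s0..t,
              ∑ i ∈ Finset.Ico n m, (Q i - Q n) * M i u) := by rw [hsplit]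
        _ = (∑ i ∈ Finset.Ico n m, (Q i - Q n) * M i s0 + D2 * (t - s0)) +
            (B*C) * ∫ u in s0..t,
              ∑ i ∈ Finset.Ico n m, (Q i - Q n) * M i u := by ring
        _ ≤ (ε/(8*e) + 2*δ*D2) + (B*C) * ∫ u in s0..t,
              ∑ i ∈ Finset.Ico n m, (Q i - Q n) * M i u :=
            add_le_add (add_le_add hS0 hts0) le_rfl
    have hs0t0 : s0 ≤ t0 + δ := by rw [hs0def]; linarith
    have hg := gronwall_int (a := s0) (b := t0+δ) hs0t0
      (((hScont (fun i => Q i - Q n) n m).mono (fun y hy => hIcc (hwin hy)))) 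
      (mul_nonneg hB hCnn) hmain
    intro t ht
    refine le_trans (hg t ht) ?_
    apply mul_le_mul_of_nonneg_left ?_
      (add_nonneg (div_nonneg hε.le (by linarith))
        (mul_nonneg (mul_nonneg (by norm_num) hδpos.le) hD2nn))
    rw [hedef]
    apply Real.exp_le_exp.2
    have h7 : t - s0 ≤ 2*δ := by
      have h := ht.2
      rw [hs0def]
      linarith
    have h8 : 2*δ ≤ T' := by
      have := hδt0
      linarith
    have hBC : (0:ℝ) ≤ B*C := mul_nonneg hB hCnn
    exact mul_le_mul_of_nonneg_left (le_trans h7 h8) hBC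
  -- conclusion
  refine ⟨δ, hδpos, 2*n, fun y hy => hIcc (hwin (by rw [hs0def]; exact hy)), ?_⟩
  intro t ht v hv
  have htwin : t ∈ Icc s0 (t0+δ) := by rwa [hs0def]
  have htD : t ∈ Ico (0:ℝ) T := hIcc (hwin htwin)
  set m : ℕ := v.sup id + 1 with hmdef
  have hvsub : v ⊆ Finset.Ico n m := by
    intro i hi
    rw [Finset.mem_Ico]
    constructor
    · have := hv i hi; omega
    · have : id i ≤ v.sup id := Finset.le_sup hi
      simp only [id] at this
      omega
  calc ∑ i ∈ v, Q i * M i t ≤ ∑ i ∈ v, 2*((Q i - Q n) * M i t) := by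
        apply Finset.sum_le_sum
        intro i hi
        have h1 := hK3 n i hnN0 (hv i hi)
        have h2 := hMnn i t htD
        have h3 := mul_nonneg (by linarith : (0:ℝ) ≤ Q i - 2*Q n) h2
        calc Q i * M i t = (2*(Q i - Q n) - (Q i - 2*Q n)) * M i t := by ring
          _ ≤ 2*((Q i - Q n) * M i t) := by
            have h4 : (2*(Q i - Q n) - (Q i - 2*Q n)) * M i t
                = 2*((Q i - Q n) * M i t) - (Q i - 2*Q n) * M i t := by ring
            linarith
    _ = 2 * ∑ i ∈ v, (Q i - Q n) * M i t := by rw [Finset.mul_sum]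
    _ ≤ 2 * ∑ i ∈ Finset.Ico n m, (Q i - Q n) * M i t := by
        apply mul_le_mul_of_nonneg_left ?_ (by norm_num)
        apply Finset.sum_le_sum_of_subset_of_nonneg hvsub
        exact fun i hi _ => mul_nonneg
          (sub_nonneg.2 (hQmono n i hnN0 (Finset.mem_Ico.1 hi).1)) (hMnn i t htD)
    _ ≤ 2 * ((ε/(8*e) + 2*δ*D2) * e) := by
        have := hgronB m t htwin
        linarith
    _ ≤ ε := by
        have h1 : 2 * (ε/(8*e)) * e = ε/4 := by field_simp; ring
        have h2 : 4*δ*(D2*e) ≤ 4*(ε / (32*(D2+1)*e))*(D2*e) := by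
          have := mul_le_mul_of_nonneg_right hδε (mul_nonneg hD2nn hepos.le)
          linarith
        have hce : ε / (32*(D2+1)*e) * (32*(D2+1)*e) = ε :=
          div_mul_cancel₀ _ (ne_of_gt hXpos)
        have h3 : 4*(ε / (32*(D2+1)*e))*(D2*e) ≤ ε/8 := by
          calc 4*(ε / (32*(D2+1)*e))*(D2*e) ≤ 4*(ε / (32*(D2+1)*e))*((D2+1)*e) := by
                apply mul_le_mul_of_nonneg_left ?_
                  (by
                    have := div_nonneg hε.le hXpos.le
                    linarith)
                exact mul_le_mul_of_nonneg_right (by linarith) hepos.le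
            _ = (ε / (32*(D2+1)*e) * (32*(D2+1)*e))/8 := by ring
            _ = ε/8 := by rw [hce]
        nlinarith [hepos.le, hD2nn, hδpos.le]

set_option maxHeartbeats 1000000 in
lemma cont_weighted
    (k p q : ℕ → ℝ) (hk : ∀ i, 0 ≤ k i) (hp : ∀ i, 0 ≤ p i) (hq : ∀ i, 0 ≤ q i)
    (r α : ℝ) (T : ℝ) (x : ℝ → ℝ) (M : ℕ → ℝ → ℝ)
    (hsol : IsSol k p q r α (Set.Ico 0 T) x M)
    (hT : 0 < T)
    (Q : ℕ → ℝ) (hQdef : ∀ i, Q i = (i:ℝ) * q i)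
    (N0 : ℕ) (hN01 : 1 ≤ N0)
    (B : ℝ) (hB : 0 ≤ B)
    (hQmono : ∀ n i, N0 ≤ n → n ≤ i → Q n ≤ Q i)
    (hK1 : ∀ i, N0 ≤ i → (Q (i+1) - Q i) * k i ≤ B * Q i)
    (hK3 : ∀ n i, N0 ≤ n → 2*n ≤ i → 2 * Q n ≤ Q i)
    (c : ℕ → ℝ) (cc : ℝ) (hccnn : 0 ≤ cc) (hcnn : ∀ i, 0 ≤ c i)
    (hcQ : ∀ i, N0 ≤ i → c i ≤ cc * Q i)
    (hcsum : ∀ t ∈ Ico (0:ℝ) T, Summable (fun i : ℕ => c i * M i t)) :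
    ContinuousOn (fun t => ∑' i : ℕ, c i * M i t) (Ioo 0 T) := by
  have hMnn : ∀ i, ∀ t ∈ Ico (0:ℝ) T, 0 ≤ M i t := hsol.M_nonneg
  intro t0 ht0
  apply ContinuousAt.continuousWithinAt
  rw [Metric.continuousAt_iff]
  intro ε hε
  have hε4 : 0 < (ε/4)/(cc+1) := by positivity
  obtain ⟨δ1, hδ1pos, m1, hsub, htail⟩ := tail_small k p q hk hp hq r α T x M hsol hT Q hQdef
    N0 hN01 B hB hQmono hK1 hK3 t0 ht0 ((ε/4)/(cc+1)) hε4
  obtain ⟨m2, hm2⟩ : ∃ m2 : ℕ, m2 = max m1 N0 := ⟨_, rfl⟩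
  have hm2m1 : m1 ≤ m2 := hm2 ▸ le_max_left _ _
  have hm2N0 : N0 ≤ m2 := hm2 ▸ le_max_right _ _
  have hPcont : ContinuousAt (fun t => ∑ i ∈ Finset.range m2, c i * M i t) t0 := by
    apply ContinuousOn.continuousAt ?_ (isOpen_Ioo.mem_nhds ht0)
    exact continuousOn_finset_sum _
      (fun i _ => continuousOn_const.mul ((hsol.M_cont i).mono Ioo_subset_Ico_self))
  rw [Metric.continuousAt_iff] at hPcont
  obtain ⟨δ2, hδ2pos, hP⟩ := hPcont (ε/4) (by linarith)
  refine ⟨min δ1 δ2, lt_min hδ1pos hδ2pos, ?_⟩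
  intro y hy
  have hyd1 : dist y t0 < δ1 := lt_of_lt_of_le hy (min_le_left _ _)
  have hyd2 : dist y t0 < δ2 := lt_of_lt_of_le hy (min_le_right _ _)
  have hymem : y ∈ Icc (t0-δ1) (t0+δ1) := by
    rw [Real.dist_eq] at hyd1
    have := abs_lt.1 hyd1
    constructor <;> [linarith [this.1]; linarith [this.2]]
  have ht0mem : t0 ∈ Icc (t0-δ1) (t0+δ1) := ⟨by linarith, by linarith⟩
  -- uniform bound for the tails
  have htailc : ∀ t ∈ Icc (t0-δ1) (t0+δ1), ∑' i : ℕ, c (i+m2) * M (i+m2) t ≤ ε/4 := by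
    intro t ht
    have htD : t ∈ Ico (0:ℝ) T := hsub ht
    have hsummt : Summable (fun i : ℕ => c (i+m2) * M (i+m2) t) :=
      (summable_nat_add_iff m2).2 (hcsum t htD)
    apply Summable.tsum_le_of_sum_le hsummt
    intro v
    have hmap : ∑ i ∈ v, c (i+m2) * M (i+m2) t
        = ∑ j ∈ v.map (addRightEmbedding m2), c j * M j t := by
      rw [Finset.sum_map]
      apply Finset.sum_congr rfl
      intro i _
      simp [addRightEmbedding]
    rw [hmap]
    have hge : ∀ j ∈ v.map (addRightEmbedding m2), m2 ≤ j := by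
      intro j hj
      obtain ⟨i, _, hij⟩ := Finset.mem_map.1 hj
      have : i + m2 = j := hij
      omega
    calc ∑ j ∈ v.map (addRightEmbedding m2), c j * M j t
        ≤ ∑ j ∈ v.map (addRightEmbedding m2), cc * (Q j * M j t) := by
          apply Finset.sum_le_sum
          intro j hj
          have hjN0 : N0 ≤ j := le_trans hm2N0 (hge j hj)
          have hMj := hMnn j t htD
          calc c j * M j t ≤ (cc * Q j) * M j t :=
                mul_le_mul_of_nonneg_right (hcQ j hjN0) hMj
            _ = cc * (Q j * M j t) := by ring
      _ = cc * ∑ j ∈ v.map (addRightEmbedding m2), Q j * M j t := by rw [Finset.mul_sum]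
      _ ≤ cc * ((ε/4)/(cc+1)) := by
          apply mul_le_mul_of_nonneg_left ?_ hccnn
          exact htail t ht _ (fun j hj => le_trans hm2m1 (hge j hj))
      _ ≤ ε/4 := by
          rw [mul_div_assoc']
          rw [div_le_iff₀ (by linarith)]
          nlinarith
  -- decomposition into partial sum and tail
  have hdec : ∀ t ∈ Icc (t0-δ1) (t0+δ1), ∑' i : ℕ, c i * M i t
      = ∑ i ∈ Finset.range m2, c i * M i t + ∑' i : ℕ, c (i+m2) * M (i+m2) t :=
    fun t ht => (Summable.sum_add_tsum_nat_add m2 (hcsum t (hsub ht))).symm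
  have hRnn : ∀ t ∈ Icc (t0-δ1) (t0+δ1), 0 ≤ ∑' i : ℕ, c (i+m2) * M (i+m2) t :=
    fun t ht => tsum_nonneg (fun i => mul_nonneg (hcnn _) (hMnn _ t (hsub ht)))
  rw [Real.dist_eq, hdec y hymem, hdec t0 ht0mem]
  have hPy : |(∑ i ∈ Finset.range m2, c i * M i y) - ∑ i ∈ Finset.range m2, c i * M i t0|
      < ε/4 := by
    have := hP hyd2
    rwa [Real.dist_eq] at this
  have h1 := htailc y hymem
  have h2 := htailc t0 ht0mem
  have h3 := hRnn y hymem
  have h4 := hRnn t0 ht0mem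
  have habs : |(∑ i ∈ Finset.range m2, c i * M i y + ∑' i : ℕ, c (i+m2) * M (i+m2) y)
      - (∑ i ∈ Finset.range m2, c i * M i t0 + ∑' i : ℕ, c (i+m2) * M (i+m2) t0)|
      ≤ |(∑ i ∈ Finset.range m2, c i * M i y) - ∑ i ∈ Finset.range m2, c i * M i t0|
        + (∑' i : ℕ, c (i+m2) * M (i+m2) y) + (∑' i : ℕ, c (i+m2) * M (i+m2) t0) := by
    have he : (∑ i ∈ Finset.range m2, c i * M i y + ∑' i : ℕ, c (i+m2) * M (i+m2) y)
        - (∑ i ∈ Finset.range m2, c i * M i t0 + ∑' i : ℕ, c (i+m2) * M (i+m2) t0)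
        = ((∑ i ∈ Finset.range m2, c i * M i y) - ∑ i ∈ Finset.range m2, c i * M i t0)
          + ((∑' i : ℕ, c (i+m2) * M (i+m2) y) - ∑' i : ℕ, c (i+m2) * M (i+m2) t0) := by
      ring
    rw [he]
    refine le_trans (abs_add_le _ _) ?_
    have h5 : |(∑' i : ℕ, c (i+m2) * M (i+m2) y) - ∑' i : ℕ, c (i+m2) * M (i+m2) t0|
        ≤ (∑' i : ℕ, c (i+m2) * M (i+m2) y) + ∑' i : ℕ, c (i+m2) * M (i+m2) t0 := by
      rw [abs_le]
      constructor <;> linarith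
    linarith
  linarith [habs]

set_option maxHeartbeats 1000000 in
lemma cont_tsums (k p q : ℕ → ℝ)
    (hk : ∀ i, 0 ≤ k i) (hp : ∀ i, 0 ≤ p i) (hq : ∀ i, 0 ≤ q i)
    (r α : ℝ)
    (Ck : ℝ) (hkO : ∀ i : ℕ, k i ≤ Ck * ((i : ℝ) + 1))
    (a η : ℝ) (ha : 0 < a) (hη : 0 < η)
    (N : ℕ) (hqpow : ∀ i ≥ N, q i = a * (i : ℝ) ^ η)
    (T : ℝ) (x : ℝ → ℝ) (M : ℕ → ℝ → ℝ)
    (hsol : IsSol k p q r α (Set.Ico 0 T) x M) :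
    ContinuousOn (fun t => ∑' i : ℕ, (i : ℝ) * q i * M i t) (Set.Ioo 0 T) ∧
    ContinuousOn (fun t => ∑' i : ℕ, k i * M i t) (Set.Ioo 0 T) := by
  rcases le_or_gt T 0 with hT | hT
  · have hempty : Ioo (0:ℝ) T = ∅ := Ioo_eq_empty (by linarith)
    rw [hempty]
    exact ⟨continuousOn_empty _, continuousOn_empty _⟩
  set N0 : ℕ := max N 1 with hN0def
  have hN0N : N ≤ N0 := le_max_left _ _
  have hN01 : 1 ≤ N0 := le_max_right _ _
  have hCk : 0 ≤ Ck := by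
    have h := le_trans (hk 0) (hkO 0)
    simpa using h
  set Q : ℕ → ℝ := fun i => (i:ℝ) * q i with hQ
  have hQdef : ∀ i, Q i = (i:ℝ) * q i := fun i => rfl
  have hcast1 : ∀ i : ℕ, N0 ≤ i → (1:ℝ) ≤ (i:ℝ) := by
    intro i hi
    exact_mod_cast le_trans hN01 hi
  have hQeq : ∀ i : ℕ, N0 ≤ i → Q i = a * (i:ℝ) ^ (η+1) := by
    intro i hi
    have h1 := hcast1 i hi
    rw [hQdef, hqpow i (le_trans hN0N hi), Real.rpow_add_one (by linarith) η]
    ring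
  have hQmono : ∀ n i : ℕ, N0 ≤ n → n ≤ i → Q n ≤ Q i := by
    intro n i hn hni
    rw [hQeq n hn, hQeq i (le_trans hn hni)]
    apply mul_le_mul_of_nonneg_left ?_ ha.le
    exact Real.rpow_le_rpow (Nat.cast_nonneg n) (Nat.cast_le.2 hni) (by linarith)
  set B : ℝ := (η+1) * Ck * (2:ℝ)^(η+1) with hBdef
  have hB : 0 ≤ B := by
    apply mul_nonneg (mul_nonneg (by linarith) hCk)
    exact (Real.rpow_pos_of_pos (by norm_num) _).le
  have hK1 : ∀ i, N0 ≤ i → (Q (i+1) - Q i) * k i ≤ B * Q i := by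
    intro i hi
    have h1 := hcast1 i hi
    have hd : Q (i+1) - Q i = a * (((i:ℝ)+1)^(η+1) - (i:ℝ)^(η+1)) := by
      rw [hQeq (i+1) (by omega), hQeq i hi]
      push_cast
      ring
    have hmvt : ((i:ℝ)+1)^(η+1) - (i:ℝ)^(η+1) ≤ (η+1) * ((i:ℝ)+1)^η := by
      have := rpow_succ_sub_le h1 (by linarith : (1:ℝ) ≤ η+1)
      simpa using this
    have hdle : Q (i+1) - Q i ≤ a * ((η+1) * ((i:ℝ)+1)^η) := by
      rw [hd]
      exact mul_le_mul_of_nonneg_left hmvt ha.le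
    have hdnn : 0 ≤ Q (i+1) - Q i := sub_nonneg.2 (hQmono i (i+1) hi (Nat.le_succ i))
    have hrhsnn : 0 ≤ a * ((η+1) * ((i:ℝ)+1)^η) := by
      apply mul_nonneg ha.le
      apply mul_nonneg (by linarith)
      exact (Real.rpow_pos_of_pos (by linarith) _).le
    calc (Q (i+1) - Q i) * k i ≤ (a * ((η+1) * ((i:ℝ)+1)^η)) * (Ck * ((i:ℝ)+1)) :=
          mul_le_mul hdle (hkO i) (hk i) hrhsnn
      _ = (η+1) * Ck * (a * (((i:ℝ)+1)^η * ((i:ℝ)+1))) := by ring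
      _ = (η+1) * Ck * (a * ((i:ℝ)+1)^(η+1)) := by
          rw [Real.rpow_add_one (by linarith : (i:ℝ)+1 ≠ 0) η]
      _ ≤ (η+1) * Ck * (a * ((2:ℝ)^(η+1) * (i:ℝ)^(η+1))) := by
          apply mul_le_mul_of_nonneg_left ?_ (mul_nonneg (by linarith) hCk)
          apply mul_le_mul_of_nonneg_left ?_ ha.le
          rw [← Real.mul_rpow (by norm_num) (Nat.cast_nonneg i)]
          exact Real.rpow_le_rpow (by linarith) (by linarith) (by linarith)
      _ = B * (a * (i:ℝ)^(η+1)) := by rw [hBdef]; ring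
      _ = B * Q i := by rw [hQeq i hi]
  have hK3 : ∀ n i : ℕ, N0 ≤ n → 2*n ≤ i → 2 * Q n ≤ Q i := by
    intro n i hn hni
    have hiN0 : N0 ≤ i := le_trans hn (by omega)
    rw [hQeq n hn, hQeq i hiN0]
    have h2n : ((2*n : ℕ) : ℝ)^(η+1) ≤ (i:ℝ)^(η+1) :=
      Real.rpow_le_rpow (Nat.cast_nonneg _) (Nat.cast_le.2 hni) (by linarith)
    have hsplit : ((2*n : ℕ) : ℝ)^(η+1) = (2:ℝ)^(η+1) * (n:ℝ)^(η+1) := by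
      push_cast
      exact Real.mul_rpow (by norm_num) (Nat.cast_nonneg n)
    have h2e : (2:ℝ) ≤ (2:ℝ)^(η+1) := by
      nth_rewrite 1 [← Real.rpow_one 2]
      exact Real.rpow_le_rpow_of_exponent_le (by norm_num) (by linarith)
    have hnn : (0:ℝ) ≤ (n:ℝ)^(η+1) := (Real.rpow_nonneg (Nat.cast_nonneg n) _)
    calc 2 * (a * (n:ℝ)^(η+1)) ≤ (2:ℝ)^(η+1) * (a * (n:ℝ)^(η+1)) := by
          nlinarith [mul_nonneg (by linarith : (0:ℝ) ≤ (2:ℝ)^(η+1) - 2)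
            (mul_nonneg ha.le hnn)]
      _ = a * ((2:ℝ)^(η+1) * (n:ℝ)^(η+1)) := by ring
      _ = a * ((2*n : ℕ) : ℝ)^(η+1) := by rw [hsplit]
      _ ≤ a * (i:ℝ)^(η+1) := mul_le_mul_of_nonneg_left h2n ha.le
  have hMnn := hsol.M_nonneg
  constructor
  · exact cont_weighted k p q hk hp hq r α T x M hsol hT Q hQdef N0 hN01 B hB hQmono hK1 hK3
      (fun i => (i:ℝ) * q i) 1 (by norm_num)
      (fun i => mul_nonneg (Nat.cast_nonneg i) (hq i))
      (fun i _ => by rw [one_mul, hQdef])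
      (fun t ht => by
        apply Summable.of_nonneg_of_le
          (fun i => mul_nonneg (mul_nonneg (Nat.cast_nonneg i) (hq i)) (hMnn i t ht))
          (fun i => ?_) (hsol.summable_mom t ht)
        apply mul_le_mul_of_nonneg_right ?_ (hMnn i t ht)
        have h1 := mul_nonneg (Nat.cast_nonneg (α := ℝ) i) (hp i)
        have h2 := hk i
        linarith)
  · exact cont_weighted k p q hk hp hq r α T x M hsol hT Q hQdef N0 hN01 B hB hQmono hK1 hK3
      k (2*Ck/a) (by positivity) hk
      (fun i hi => by
        have h1 := hcast1 i hi
        have hQi : a * (i:ℝ) ≤ Q i := by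
          rw [hQeq i hi]
          apply mul_le_mul_of_nonneg_left ?_ ha.le
          nth_rewrite 1 [← Real.rpow_one (i:ℝ)]
          exact Real.rpow_le_rpow_of_exponent_le h1 (by linarith)
        have h2 : k i ≤ Ck * ((i:ℝ)+1) := hkO i
        have h3 : Ck * ((i:ℝ)+1) ≤ 2*Ck*(i:ℝ) := by nlinarith
        have h4 : 2*Ck*(i:ℝ) = (2*Ck/a) * (a * (i:ℝ)) := by field_simp
        have h5 : (2*Ck/a) * (a * (i:ℝ)) ≤ (2*Ck/a) * Q i :=
          mul_le_mul_of_nonneg_left hQi (by positivity)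
        linarith)
      (fun t ht => by
        apply Summable.of_nonneg_of_le
          (fun i => mul_nonneg (hk i) (hMnn i t ht))
          (fun i => ?_) (hsol.summable_mom t ht)
        apply mul_le_mul_of_nonneg_right ?_ (hMnn i t ht)
        have h1 := mul_nonneg (Nat.cast_nonneg (α := ℝ) i) (hp i)
        have h2 := mul_nonneg (Nat.cast_nonneg (α := ℝ) i) (hq i)
        linarith)

set_option maxHeartbeats 1000000 in
/-- Corollary 6.3: if `kᵢ = O(i)` and, for sufficiently large `i`,
`qᵢ = a i^η` with `a, η > 0`, then every solution on `[0,T)` has `C¹` components on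
`(0,T)` and satisfies the silicosis equations in the classical sense on `(0,T)`. -/
theorem silicosis_C1_regularity_power_q
    (k p q : ℕ → ℝ)
    (hk : ∀ i, 0 ≤ k i) (hp : ∀ i, 0 ≤ p i) (hq : ∀ i, 0 ≤ q i)
    (r α : ℝ) (hr : 0 ≤ r) (hα : 0 ≤ α)
    (Ck : ℝ) (hkO : ∀ i : ℕ, k i ≤ Ck * ((i : ℝ) + 1))
    (a η : ℝ) (ha : 0 < a) (hη : 0 < η)
    (N : ℕ) (hqpow : ∀ i ≥ N, q i = a * (i : ℝ) ^ η)
    (T : ℝ) (x : ℝ → ℝ) (M : ℕ → ℝ → ℝ)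
    (hsol : IsSol k p q r α (Set.Ico 0 T) x M) :
    -- the equations hold in the classical differential sense on (0,T)
    (∀ t ∈ Set.Ioo (0:ℝ) T,
      HasDerivAt (M 0) (r - k 0 * x t * M 0 t - (p 0 + q 0) * M 0 t) t ∧
      (∀ i : ℕ, 1 ≤ i →
        HasDerivAt (M i)
          (k (i-1) * x t * M (i-1) t - k i * x t * M i t - (p i + q i) * M i t) t) ∧
      HasDerivAt x
        (α - x t * ∑' i : ℕ, k i * M i t + ∑' i : ℕ, (i : ℝ) * q i * M i t) t) ∧
    -- the derivatives are continuous on (0,T)  (so the components are C¹ there)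
    ContinuousOn (fun t => α - x t * ∑' i : ℕ, k i * M i t
      + ∑' i : ℕ, (i : ℝ) * q i * M i t) (Set.Ioo 0 T) ∧
    (∀ i : ℕ, 1 ≤ i →
      ContinuousOn (fun t => k (i-1) * x t * M (i-1) t - k i * x t * M i t
        - (p i + q i) * M i t) (Set.Ioo 0 T)) ∧
    ContinuousOn (fun t => r - k 0 * x t * M 0 t - (p 0 + q 0) * M 0 t) (Set.Ioo 0 T) := by
  obtain ⟨hcQ, hck⟩ := cont_tsums k p q hk hp hq r α Ck hkO a η ha hη N hqpow T x M hsol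
  have hIoo : Ioo (0:ℝ) T ⊆ Ico 0 T := fun y hy => ⟨hy.1.le, hy.2⟩
  have hxc : ContinuousOn x (Ioo 0 T) := hsol.x_cont.mono hIoo
  have hMc : ∀ i, ContinuousOn (M i) (Ioo 0 T) := fun i => (hsol.M_cont i).mono hIoo
  have hMnn := hsol.M_nonneg
  refine ⟨?_, ?_, ?_, ?_⟩
  · intro t0 ht0
    have ht0D : t0 ∈ Ico (0:ℝ) T := hIoo ht0
    have hnhds : Ioo (0:ℝ) T ∈ nhds t0 := isOpen_Ioo.mem_nhds ht0
    have huIcc : uIcc (0:ℝ) t0 ⊆ Ico (0:ℝ) T := by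
      rw [uIcc_of_le ht0.1.le]
      exact fun y hy => ⟨hy.1, lt_of_le_of_lt hy.2 ht0.2⟩
    refine ⟨?_, ?_, ?_⟩
    · -- M 0 equation
      have hGc : ContinuousOn (fun s => k 0 * x s * M 0 s + (p 0 + q 0) * M 0 s)
          (Ico (0:ℝ) T) :=
        ((continuousOn_const.mul hsol.x_cont).mul (hsol.M_cont 0)).add
          (continuousOn_const.mul (hsol.M_cont 0))
      have hGint : IntervalIntegrable (fun s => k 0 * x s * M 0 s + (p 0 + q 0) * M 0 s)
          volume 0 t0 := (hGc.mono huIcc).intervalIntegrable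
      have hd2 : HasDerivAt
          (fun u => ∫ s in (0:ℝ)..u, (k 0 * x s * M 0 s + (p 0 + q 0) * M 0 s))
          (k 0 * x t0 * M 0 t0 + (p 0 + q 0) * M 0 t0) t0 :=
        intervalIntegral.integral_hasDerivAt_right hGint
          ((hGc.mono hIoo).stronglyMeasurableAtFilter isOpen_Ioo t0 ht0)
          ((hGc.mono hIoo).continuousAt hnhds)
      have h1 : HasDerivAt (fun u : ℝ => M 0 0 + r*u) r t0 := by
        simpa using ((hasDerivAt_id t0).const_mul r).const_add (M 0 0)
      have hd := h1.sub hd2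
      have heq : M 0 =ᶠ[nhds t0] (fun u => M 0 0 + r*u -
          ∫ s in (0:ℝ)..u, (k 0 * x s * M 0 s + (p 0 + q 0) * M 0 s)) :=
        Filter.eventuallyEq_of_mem hnhds (fun y hy => hsol.eq_M0 y (hIoo hy))
      have hfinal := hd.congr_of_eventuallyEq heq
      rw [sub_sub]
      exact hfinal
    · -- M i equations
      intro i hi
      have hGc : ContinuousOn (fun s =>
          k (i-1) * x s * M (i-1) s - k i * x s * M i s - (p i + q i) * M i s)
          (Ico (0:ℝ) T) :=
        (((continuousOn_const.mul hsol.x_cont).mul (hsol.M_cont (i-1))).sub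
          ((continuousOn_const.mul hsol.x_cont).mul (hsol.M_cont i))).sub
          (continuousOn_const.mul (hsol.M_cont i))
      have hGint : IntervalIntegrable (fun s =>
          k (i-1) * x s * M (i-1) s - k i * x s * M i s - (p i + q i) * M i s)
          volume 0 t0 := (hGc.mono huIcc).intervalIntegrable
      have hd2 : HasDerivAt (fun u => ∫ s in (0:ℝ)..u,
          (k (i-1) * x s * M (i-1) s - k i * x s * M i s - (p i + q i) * M i s))
          (k (i-1) * x t0 * M (i-1) t0 - k i * x t0 * M i t0 - (p i + q i) * M i t0) t0 :=
        intervalIntegral.integral_hasDerivAt_right hGint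
          ((hGc.mono hIoo).stronglyMeasurableAtFilter isOpen_Ioo t0 ht0)
          ((hGc.mono hIoo).continuousAt hnhds)
      have hd := hd2.const_add (M i 0)
      have heq : M i =ᶠ[nhds t0] (fun u => M i 0 + ∫ s in (0:ℝ)..u,
          (k (i-1) * x s * M (i-1) s - k i * x s * M i s - (p i + q i) * M i s)) :=
        Filter.eventuallyEq_of_mem hnhds (fun y hy => hsol.eq_M i hi y (hIoo hy))
      exact hd.congr_of_eventuallyEq heq
    · -- x equation
      have hFc : ContinuousOn (fun s => -(x s * ∑' i : ℕ, k i * M i s)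
          + ∑' i : ℕ, (i:ℝ) * q i * M i s) (Ioo 0 T) := ((hxc.mul hck).neg).add hcQ
      have hmom := hsol.mom_int t0 ht0D
      have hIcct0 : Icc (0:ℝ) t0 ⊆ Ico (0:ℝ) T :=
        fun y hy => ⟨hy.1, lt_of_le_of_lt hy.2 ht0.2⟩
      obtain ⟨Cb, hCb⟩ := hsol.norm_bdd t0 hIcct0
      have hCbnn : 0 ≤ Cb := by
        have h1 := hCb 0 ⟨le_rfl, ht0.1.le⟩
        have h2 := hsol.x_nonneg 0 ⟨le_rfl, lt_trans ht0.1 ht0.2⟩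
        have h3 : (0:ℝ) ≤ ∑' i : ℕ, ((i:ℝ)+1) * M i 0 :=
          tsum_nonneg (fun i => mul_nonneg (by positivity)
            (hMnn i 0 ⟨le_rfl, lt_trans ht0.1 ht0.2⟩))
        linarith
      have hxleb : ∀ s ∈ Icc (0:ℝ) t0, x s ≤ Cb := by
        intro s hs
        have h1 := hCb s hs
        have h3 : (0:ℝ) ≤ ∑' i : ℕ, ((i:ℝ)+1) * M i s :=
          tsum_nonneg (fun i => mul_nonneg (by positivity) (hMnn i s (hIcct0 hs)))
        linarith
      have hFint : IntervalIntegrable (fun s => -(x s * ∑' i : ℕ, k i * M i s)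
          + ∑' i : ℕ, (i:ℝ) * q i * M i s) volume 0 t0 := by
        apply (hmom.const_mul (Cb+1)).mono_fun
        · rw [uIoc_of_le ht0.1.le]
          have hrw : volume.restrict (Ioc (0:ℝ) t0) = volume.restrict (Ioo (0:ℝ) t0) :=
            (Measure.restrict_congr_set Ioo_ae_eq_Ioc).symm
          rw [hrw]
          exact (hFc.mono (fun y hy => ⟨hy.1, lt_trans hy.2 ht0.2⟩)).aestronglyMeasurable
            measurableSet_Ioo
        · rw [uIoc_of_le ht0.1.le, Filter.EventuallyLE, ae_restrict_iff' measurableSet_Ioc]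
          apply Filter.Eventually.of_forall
          intro s hs
          have hsD : s ∈ Ico (0:ℝ) T := ⟨hs.1.le, lt_of_lt_of_le (lt_of_le_of_lt hs.2 ht0.2) le_rfl⟩
          have hsIcc : s ∈ Icc (0:ℝ) t0 := ⟨hs.1.le, hs.2⟩
          have hsum0 := hsol.summable_mom s hsD
          have hsum1 : Summable (fun i : ℕ => k i * M i s) := by
            apply Summable.of_nonneg_of_le
              (fun i => mul_nonneg (hk i) (hMnn i s hsD)) (fun i => ?_) hsum0
            apply mul_le_mul_of_nonneg_right ?_ (hMnn i s hsD)
            have h1 := mul_nonneg (Nat.cast_nonneg (α := ℝ) i) (hp i)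
            have h2 := mul_nonneg (Nat.cast_nonneg (α := ℝ) i) (hq i)
            linarith
          have hsum2 : Summable (fun i : ℕ => (i:ℝ) * q i * M i s) := by
            apply Summable.of_nonneg_of_le
              (fun i => mul_nonneg (mul_nonneg (Nat.cast_nonneg i) (hq i)) (hMnn i s hsD))
              (fun i => ?_) hsum0
            apply mul_le_mul_of_nonneg_right ?_ (hMnn i s hsD)
            have h1 := mul_nonneg (Nat.cast_nonneg (α := ℝ) i) (hp i)
            have h2 := hk i
            linarith
          have hg1le : ∑' i : ℕ, k i * M i s
              ≤ ∑' i : ℕ, ((i:ℝ) * p i + (i:ℝ) * q i + k i) * M i s := by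
            apply Summable.tsum_le_tsum (fun i => ?_) hsum1 hsum0
            apply mul_le_mul_of_nonneg_right ?_ (hMnn i s hsD)
            have h1 := mul_nonneg (Nat.cast_nonneg (α := ℝ) i) (hp i)
            have h2 := mul_nonneg (Nat.cast_nonneg (α := ℝ) i) (hq i)
            linarith
          have hg2le : ∑' i : ℕ, (i:ℝ) * q i * M i s
              ≤ ∑' i : ℕ, ((i:ℝ) * p i + (i:ℝ) * q i + k i) * M i s := by
            apply Summable.tsum_le_tsum (fun i => ?_) hsum2 hsum0
            apply mul_le_mul_of_nonneg_right ?_ (hMnn i s hsD)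
            have h1 := mul_nonneg (Nat.cast_nonneg (α := ℝ) i) (hp i)
            have h2 := hk i
            linarith
          have hg1nn : (0:ℝ) ≤ ∑' i : ℕ, k i * M i s :=
            tsum_nonneg (fun i => mul_nonneg (hk i) (hMnn i s hsD))
          have hg2nn : (0:ℝ) ≤ ∑' i : ℕ, (i:ℝ) * q i * M i s :=
            tsum_nonneg (fun i => mul_nonneg
              (mul_nonneg (Nat.cast_nonneg i) (hq i)) (hMnn i s hsD))
          have hmomnn : (0:ℝ) ≤ ∑' i : ℕ, ((i:ℝ) * p i + (i:ℝ) * q i + k i) * M i s :=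
            le_trans hg1nn hg1le
          have hxs := hsol.x_nonneg s hsD
          have hxle := hxleb s hsIcc
          have hprod : x s * ∑' i : ℕ, k i * M i s
              ≤ Cb * ∑' i : ℕ, ((i:ℝ) * p i + (i:ℝ) * q i + k i) * M i s :=
            mul_le_mul hxle hg1le hg1nn hCbnn
          have hrhsnn : (0:ℝ) ≤ (Cb+1) * ∑' i : ℕ, ((i:ℝ) * p i + (i:ℝ) * q i + k i) * M i s :=
            mul_nonneg (by linarith) hmomnn
          rw [Real.norm_eq_abs, Real.norm_eq_abs, abs_of_nonneg hrhsnn, abs_le]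
          constructor
          · nlinarith
          · nlinarith
      have hdI : HasDerivAt (fun u => ∫ s in (0:ℝ)..u, (-(x s * ∑' i : ℕ, k i * M i s)
          + ∑' i : ℕ, (i:ℝ) * q i * M i s))
          (-(x t0 * ∑' i : ℕ, k i * M i t0) + ∑' i : ℕ, (i:ℝ) * q i * M i t0) t0 :=
        intervalIntegral.integral_hasDerivAt_right hFint
          (hFc.stronglyMeasurableAtFilter isOpen_Ioo t0 ht0)
          (hFc.continuousAt hnhds)
      have h1 : HasDerivAt (fun u : ℝ => x 0 + α*u) α t0 := by
        simpa using ((hasDerivAt_id t0).const_mul α).const_add (x 0)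
      have hd := h1.add hdI
      have heq : x =ᶠ[nhds t0] (fun u => x 0 + α*u + ∫ s in (0:ℝ)..u,
          (-(x s * ∑' i : ℕ, k i * M i s) + ∑' i : ℕ, (i:ℝ) * q i * M i s)) :=
        Filter.eventuallyEq_of_mem hnhds (fun y hy => hsol.eq_x y (hIoo hy))
      have hfinal := hd.congr_of_eventuallyEq heq
      have hval : α - x t0 * ∑' i : ℕ, k i * M i t0 + ∑' i : ℕ, (i:ℝ) * q i * M i t0
          = α + (-(x t0 * ∑' i : ℕ, k i * M i t0) + ∑' i : ℕ, (i:ℝ) * q i * M i t0) := by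
        ring
      rw [hval]
      exact hfinal
  · exact (continuousOn_const.sub (hxc.mul hck)).add hcQ
  · intro i hi
    exact (((continuousOn_const.mul hxc).mul (hMc (i-1))).sub
      ((continuousOn_const.mul hxc).mul (hMc i))).sub (continuousOn_const.mul (hMc i))
  · exact (continuousOn_const.sub ((continuousOn_const.mul hxc).mul (hMc 0))).sub
      (continuousOn_const.mul (hMc 0))
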